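/- Let G be an r-regular graph, λ > 0, and let v_1, v_2 be two non-adjacent vertices of G with no common neighbor, with neighbor sets {v_{11},...,v_{1r}} and {v_{21},...,v_{2r}} respectively. Let G° be obtained from G by deleting v_1 and v_2 and adding the r edges {v_{1j}, v_{2j}} for j = 1,...,r. Then Z(λ,G°)/Z(λ,G) = P_G(v_1 ∉ I and v_2 ∉ I) · P_{G\{v_1,v_2}}( for all j ≤ r, v_{1j} ∉ I or v_{2j} ∉ I ), where probabilities are with respect to the Gibbs measures with activity λ on the respective graphs. -/

import Mathlib

open Finset

/-- The graph `G°` obtained from `G` by the rewiring operation on the two vertices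
`v₁, v₂`: all edges incident to `v₁` or `v₂` are removed (so `v₁, v₂` become isolated and
can be regarded as deleted), and for each `j` a new edge `{w₁ j, w₂ j}` is added, where
`w₁, w₂` enumerate the neighbors of `v₁` and of `v₂` respectively. -/
def rewired {V : Type*} (G : SimpleGraph V) (v₁ v₂ : V) {r : ℕ}
    (w₁ w₂ : Fin r → V) : SimpleGraph V where
  Adj a b := a ≠ b ∧
    ((G.Adj a b ∧ a ≠ v₁ ∧ a ≠ v₂ ∧ b ≠ v₁ ∧ b ≠ v₂) ∨
      ∃ j : Fin r, (a = w₁ j ∧ b = w₂ j) ∨ (a = w₂ j ∧ b = w₁ j))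
  symm := by
    constructor
    rintro a b ⟨hab, h⟩
    refine ⟨hab.symm, ?_⟩
    rcases h with ⟨h1, h2, h3, h4, h5⟩ | ⟨j, hj | hj⟩
    · exact Or.inl ⟨h1.symm, h4, h5, h2, h3⟩
    · exact Or.inr ⟨j, Or.inr ⟨hj.2, hj.1⟩⟩
    · exact Or.inr ⟨j, Or.inl ⟨hj.2, hj.1⟩⟩
  loopless := by constructor; rintro a ⟨h, -⟩; exact h rfl

/-- `I` is an independent set of the graph `G`. -/
def IsIndepSet {V : Type*} (G : SimpleGraph V) (I : Finset V) : Prop :=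
  ∀ u ∈ I, ∀ w ∈ I, ¬ G.Adj u w

/-- The hard-core partition function `Z(λ, G[S])` of the subgraph of `G` induced on the
vertex subset `S`: the sum of `λ^|I|` over all independent sets `I ⊆ S`. -/
noncomputable def Zhard {V : Type*} [Fintype V] (G : SimpleGraph V) (lam : ℝ)
    (S : Finset V) : ℝ := by
  classical exact ∑ I ∈ S.powerset.filter (fun I => IsIndepSet G I), lam ^ I.card

/-- The probability, under the hard-core Gibbs measure with activity `λ` on the subgraph of
`G` induced on `S`, of the event `E` about the random independent set. -/
noncomputable def probEvent {V : Type*} [Fintype V] (G : SimpleGraph V) (lam : ℝ)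
    (S : Finset V) (E : Finset V → Prop) : ℝ := by
  classical exact
    (∑ I ∈ S.powerset.filter (fun I => IsIndepSet G I ∧ E I), lam ^ I.card) / Zhard G lam S

/-- `Z(λ,G°)/Z(λ,G) = P_G(v₁, v₂ ∉ I) · P_{G∖{v₁,v₂}}(∀ j, v_{1j} ∉ I ∨ v_{2j} ∉ I)`
for the rewired graph `G°`. -/
theorem statement12 {V : Type*} [Fintype V] [DecidableEq V] (G : SimpleGraph V)
    (lam : ℝ) (hlam : 0 < lam) {r : ℕ}
    (hreg : ∀ v : V, (G.neighborSet v).ncard = r)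
    (v₁ v₂ : V) (hne : v₁ ≠ v₂) (hnadj : ¬ G.Adj v₁ v₂)
    (hcommon : ∀ u : V, ¬ (G.Adj v₁ u ∧ G.Adj v₂ u))
    (w₁ w₂ : Fin r → V) (hw₁ : Function.Injective w₁) (hw₂ : Function.Injective w₂)
    (hrange₁ : Set.range w₁ = G.neighborSet v₁) (hrange₂ : Set.range w₂ = G.neighborSet v₂) :
    Zhard (rewired G v₁ v₂ w₁ w₂) lam (Finset.univ \ {v₁, v₂}) / Zhard G lam Finset.univ =
      probEvent G lam Finset.univ (fun I => v₁ ∉ I ∧ v₂ ∉ I) *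
        probEvent G lam (Finset.univ \ {v₁, v₂})
          (fun I => ∀ j : Fin r, w₁ j ∉ I ∨ w₂ j ∉ I) := by
  classical
  set S : Finset V := Finset.univ \ {v₁, v₂} with hSdef
  have hw1v : ∀ j, G.Adj v₁ (w₁ j) := fun j => by
    have : w₁ j ∈ G.neighborSet v₁ := hrange₁ ▸ Set.mem_range_self j
    exact this
  have hw2v : ∀ j, G.Adj v₂ (w₂ j) := fun j => by
    have : w₂ j ∈ G.neighborSet v₂ := hrange₂ ▸ Set.mem_range_self j
    exact this
  have hne12 : ∀ j, w₁ j ≠ w₂ j := fun j h => hcommon (w₁ j) ⟨hw1v j, h ▸ hw2v j⟩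
  have hDpos : 0 < Zhard G lam S := by
    unfold Zhard
    refine Finset.sum_pos (fun I _ => pow_pos hlam _) ⟨∅, ?_⟩
    exact Finset.mem_filter.mpr ⟨Finset.mem_powerset.mpr (Finset.empty_subset _), fun u hu => by simp at hu⟩
  have key1 : probEvent G lam Finset.univ (fun I => v₁ ∉ I ∧ v₂ ∉ I)
      = Zhard G lam S / Zhard G lam Finset.univ := by
    unfold probEvent Zhard
    congr 1
    refine Finset.sum_congr ?_ (fun _ _ => rfl)
    ext I
    simp only [Finset.mem_filter, Finset.mem_powerset, hSdef, Finset.subset_sdiff,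
      Finset.subset_univ, true_and, Finset.disjoint_insert_right,
      Finset.disjoint_singleton_right]
    tauto
  have key2 : Zhard (rewired G v₁ v₂ w₁ w₂) lam S
      = probEvent G lam S (fun I => ∀ j : Fin r, w₁ j ∉ I ∨ w₂ j ∉ I) * Zhard G lam S := by
    unfold probEvent
    rw [div_mul_cancel₀ _ (ne_of_gt hDpos)]
    unfold Zhard
    refine Finset.sum_congr ?_ (fun _ _ => rfl)
    ext I
    simp only [Finset.mem_filter, Finset.mem_powerset, and_congr_right_iff]
    intro hIS
    have hmem : ∀ x ∈ I, x ≠ v₁ ∧ x ≠ v₂ := fun x hx => by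
      have := hIS hx
      simp only [hSdef, Finset.mem_sdiff, Finset.mem_insert, Finset.mem_singleton] at this
      tauto
    constructor
    · intro h
      refine ⟨fun u hu w hw hadj => h u hu w hw
        ⟨hadj.ne, Or.inl ⟨hadj, (hmem u hu).1, (hmem u hu).2,
          (hmem w hw).1, (hmem w hw).2⟩⟩, ?_⟩
      intro j
      by_contra hc
      push_neg at hc
      exact h _ hc.1 _ hc.2 ⟨hne12 j, Or.inr ⟨j, Or.inl ⟨rfl, rfl⟩⟩⟩
    · rintro ⟨hind, hpair⟩ u hu w hw ⟨hab, hG | ⟨j, ⟨h1, h2⟩ | ⟨h1, h2⟩⟩⟩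
      · exact hind u hu w hw hG.1
      · rcases hpair j with h | h
        · exact h (h1 ▸ hu)
        · exact h (h2 ▸ hw)
      · rcases hpair j with h | h
        · exact h (h2 ▸ hw)
        · exact h (h1 ▸ hu)
  rw [key1, key2]
  ring
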